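/- Let M be an m×m real matrix, N an n×n real matrix, and p ≥ 1. Then the p↦p operator norm is multiplicative under the Kronecker (tensor) product: ‖M ⊗ N‖_{p→p} = ‖M‖_{p→p} · ‖N‖_{p→p}. -/

import Mathlib

open Kronecker

/-- The `ℓ_p` norm of a vector for a real exponent `p`. -/
noncomputable def pnorm {ι : Type*} [Fintype ι] (p : ℝ) (x : ι → ℝ) : ℝ :=
  (∑ i, |x i| ^ p) ^ (1 / p)

/-- The `q ↦ p` operator norm of a matrix `A`. -/
noncomputable def opNorm {ι κ : Type*} [Fintype ι] [Fintype κ] (q p : ℝ)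
    (A : Matrix ι κ ℝ) : ℝ :=
  sSup {r : ℝ | ∃ x : κ → ℝ, x ≠ 0 ∧ r = pnorm p (A.mulVec x) / pnorm q x}

section helpers
variable {ι κ : Type*} [Fintype ι] [Fintype κ] {p : ℝ}

lemma sum_abs_rpow_nonneg (p : ℝ) (x : ι → ℝ) : 0 ≤ ∑ i, |x i| ^ p :=
  Finset.sum_nonneg fun i _ => Real.rpow_nonneg (abs_nonneg _) _

lemma pnorm_nonneg (p : ℝ) (x : ι → ℝ) : 0 ≤ pnorm p x :=
  Real.rpow_nonneg (sum_abs_rpow_nonneg p x) _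

lemma pnorm_rpow (hp : p ≠ 0) (x : ι → ℝ) : pnorm p x ^ p = ∑ i, |x i| ^ p := by
  rw [pnorm, ← Real.rpow_mul (sum_abs_rpow_nonneg p x), one_div_mul_cancel hp, Real.rpow_one]

lemma pnorm_pos (hp : 0 < p) {x : ι → ℝ} (hx : x ≠ 0) : 0 < pnorm p x := by
  obtain ⟨j, hj⟩ := Function.ne_iff.mp hx
  have h1 : 0 < |x j| ^ p := Real.rpow_pos_of_pos (abs_pos.mpr hj) p
  have h2 : |x j| ^ p ≤ ∑ i, |x i| ^ p :=
    Finset.single_le_sum (fun i _ => Real.rpow_nonneg (abs_nonneg _) _) (Finset.mem_univ j)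
  exact Real.rpow_pos_of_pos (lt_of_lt_of_le h1 h2) _

lemma pnorm_zero (hp : 0 < p) : pnorm p (0 : ι → ℝ) = 0 := by
  simp [pnorm, Real.zero_rpow hp.ne', Real.zero_rpow (inv_ne_zero hp.ne')]

lemma pnorm_tensor (hp : 0 < p) (x : ι → ℝ) (y : κ → ℝ) :
    pnorm p (fun ik : ι × κ => x ik.1 * y ik.2) = pnorm p x * pnorm p y := by
  have h : ∑ ik : ι × κ, |x ik.1 * y ik.2| ^ p
      = (∑ i, |x i| ^ p) * (∑ k, |y k| ^ p) := by
    rw [Fintype.sum_prod_type, Finset.sum_mul_sum]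
    refine Finset.sum_congr rfl fun i _ => Finset.sum_congr rfl fun k _ => ?_
    rw [abs_mul, Real.mul_rpow (abs_nonneg _) (abs_nonneg _)]
  rw [pnorm, h, Real.mul_rpow (sum_abs_rpow_nonneg p x) (sum_abs_rpow_nonneg p y)]
  rfl

lemma abs_le_pnorm (hp : 0 < p) (x : ι → ℝ) (j : ι) : |x j| ≤ pnorm p x := by
  have h2 : |x j| ^ p ≤ ∑ i, |x i| ^ p :=
    Finset.single_le_sum (fun i _ => Real.rpow_nonneg (abs_nonneg _) _) (Finset.mem_univ j)
  have := Real.rpow_le_rpow (Real.rpow_nonneg (abs_nonneg _) _) h2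
    (le_of_lt (one_div_pos.mpr hp))
  rwa [← Real.rpow_mul (abs_nonneg _), mul_one_div_cancel hp.ne', Real.rpow_one] at this

lemma pnorm_mulVec_le_cbound (hp : 0 < p) (A : Matrix ι κ ℝ) (x : κ → ℝ) :
    pnorm p (A.mulVec x) ≤ (∑ i, (∑ j, |A i j|) ^ p) ^ (1 / p) * pnorm p x := by
  have h2 : ∀ i, |A.mulVec x i| ≤ (∑ j, |A i j|) * pnorm p x := by
    intro i
    calc |A.mulVec x i| ≤ ∑ j, |A i j| * |x j| := by
          rw [Matrix.mulVec, dotProduct]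
          exact (Finset.abs_sum_le_sum_abs _ _).trans (le_of_eq (by simp [abs_mul]))
      _ ≤ ∑ j, |A i j| * pnorm p x :=
          Finset.sum_le_sum fun j _ => mul_le_mul_of_nonneg_left (abs_le_pnorm hp x j) (abs_nonneg _)
      _ = (∑ j, |A i j|) * pnorm p x := by rw [Finset.sum_mul]
  have h3 : ∑ i, |A.mulVec x i| ^ p ≤ (∑ i, (∑ j, |A i j|) ^ p) * pnorm p x ^ p := by
    rw [Finset.sum_mul]
    refine Finset.sum_le_sum fun i _ => ?_
    calc |A.mulVec x i| ^ p ≤ ((∑ j, |A i j|) * pnorm p x) ^ p :=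
          Real.rpow_le_rpow (abs_nonneg _) (h2 i) hp.le
      _ = (∑ j, |A i j|) ^ p * pnorm p x ^ p :=
          Real.mul_rpow (Finset.sum_nonneg fun j _ => abs_nonneg _) (pnorm_nonneg p x)
  calc pnorm p (A.mulVec x) = (∑ i, |A.mulVec x i| ^ p) ^ (1/p) := rfl
    _ ≤ ((∑ i, (∑ j, |A i j|) ^ p) * pnorm p x ^ p) ^ (1/p) :=
        Real.rpow_le_rpow (sum_abs_rpow_nonneg _ _) h3 (le_of_lt (one_div_pos.mpr hp))
    _ = (∑ i, (∑ j, |A i j|) ^ p) ^ (1/p) * pnorm p x := by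
        rw [Real.mul_rpow (by positivity) (Real.rpow_nonneg (pnorm_nonneg p x) _),
          ← Real.rpow_mul (pnorm_nonneg p x), mul_one_div_cancel hp.ne', Real.rpow_one]

lemma opNorm_set_bddAbove (hp : 0 < p) (A : Matrix ι κ ℝ) :
    BddAbove {r : ℝ | ∃ x : κ → ℝ, x ≠ 0 ∧ r = pnorm p (A.mulVec x) / pnorm p x} := by
  refine ⟨(∑ i, (∑ j, |A i j|) ^ p) ^ (1 / p), ?_⟩
  rintro r ⟨x, hx, rfl⟩
  rw [div_le_iff₀ (pnorm_pos hp hx)]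
  exact pnorm_mulVec_le_cbound hp A x

lemma opNorm_nonneg' [Nonempty κ] (hp : 0 < p) (A : Matrix ι κ ℝ) : 0 ≤ opNorm p p A := by
  have hx : (fun _ : κ => (1:ℝ)) ≠ 0 := by
    intro h
    have := congrFun h (Classical.arbitrary κ)
    simpa using this
  have h := le_csSup (opNorm_set_bddAbove hp A)
    (⟨(fun _ : κ => (1:ℝ)), hx, rfl⟩ :
      pnorm p (A.mulVec fun _ => 1) / pnorm p (fun _ : κ => (1:ℝ)) ∈
      {r : ℝ | ∃ x : κ → ℝ, x ≠ 0 ∧ r = pnorm p (A.mulVec x) / pnorm p x})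
  exact le_trans (div_nonneg (pnorm_nonneg _ _) (pnorm_nonneg _ _)) h

lemma pnorm_mulVec_le (hp : 0 < p) (A : Matrix ι κ ℝ) (x : κ → ℝ) :
    pnorm p (A.mulVec x) ≤ opNorm p p A * pnorm p x := by
  by_cases hx : x = 0
  · subst hx; rw [Matrix.mulVec_zero, pnorm_zero hp, pnorm_zero hp, mul_zero]
  · have h := le_csSup (opNorm_set_bddAbove hp A) (⟨x, hx, rfl⟩ :
      pnorm p (A.mulVec x) / pnorm p x ∈
      {r : ℝ | ∃ x : κ → ℝ, x ≠ 0 ∧ r = pnorm p (A.mulVec x) / pnorm p x})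
    rwa [div_le_iff₀ (pnorm_pos hp hx)] at h

lemma opNorm_le_of_bound (hp : 0 < p) {A : Matrix ι κ ℝ} {C : ℝ} (hC : 0 ≤ C)
    (h : ∀ x : κ → ℝ, pnorm p (A.mulVec x) ≤ C * pnorm p x) : opNorm p p A ≤ C := by
  rw [opNorm]
  by_cases hS : {r : ℝ | ∃ x : κ → ℝ, x ≠ 0 ∧ r = pnorm p (A.mulVec x) / pnorm p x}.Nonempty
  · refine csSup_le hS ?_
    rintro r ⟨x, hx, rfl⟩
    rw [div_le_iff₀ (pnorm_pos hp hx)]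
    exact h x
  · rw [Set.not_nonempty_iff_eq_empty.mp hS, Real.sSup_empty]; exact hC

lemma opNorm_of_isEmpty [IsEmpty κ] (q p : ℝ) (A : Matrix ι κ ℝ) : opNorm q p A = 0 := by
  have h : {r : ℝ | ∃ x : κ → ℝ, x ≠ 0 ∧ r = pnorm p (A.mulVec x) / pnorm q x} = ∅ := by
    ext r
    simp only [Set.mem_setOf_eq, Set.mem_empty_iff_false, iff_false]
    rintro ⟨x, hx, -⟩
    exact hx (funext fun j => (IsEmpty.false j).elim)
  rw [opNorm, h, Real.sSup_empty]

lemma csSup_mul_csSup_le {S T : Set ℝ} (hS : S.Nonempty) (hT : T.Nonempty)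
    (hTb : BddAbove T)
    (hSnn : ∀ a ∈ S, 0 ≤ a) (hTnn : ∀ b ∈ T, 0 ≤ b) {C : ℝ} (hC : 0 ≤ C)
    (h : ∀ a ∈ S, ∀ b ∈ T, a * b ≤ C) : sSup S * sSup T ≤ C := by
  obtain ⟨b0, hb0⟩ := hT
  have hT0 : 0 ≤ sSup T := le_trans (hTnn b0 hb0) (le_csSup hTb hb0)
  rcases eq_or_lt_of_le hT0 with hT0' | hT0'
  · rw [← hT0', mul_zero]; exact hC
  · rw [← le_div_iff₀ hT0']
    refine csSup_le hS fun a ha => ?_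
    rw [le_div_iff₀ hT0']
    rcases eq_or_lt_of_le (hSnn a ha) with ha0 | ha0
    · rw [← ha0, zero_mul]; exact hC
    · have hTle : sSup T ≤ C / a := csSup_le ⟨b0, hb0⟩ fun b hb => by
        rw [le_div_iff₀ ha0]; rw [mul_comm]; exact h a ha b hb
      calc a * sSup T ≤ a * (C / a) := mul_le_mul_of_nonneg_left hTle ha0.le
        _ = C := by field_simp

end helpers

lemma kron_mulVec_tensor {m n : ℕ} (M : Matrix (Fin m) (Fin m) ℝ) (N : Matrix (Fin n) (Fin n) ℝ)
    (x : Fin m → ℝ) (y : Fin n → ℝ) :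
    (M ⊗ₖ N).mulVec (fun jl => x jl.1 * y jl.2)
      = fun ik => M.mulVec x ik.1 * N.mulVec y ik.2 := by
  funext ik
  rw [Matrix.mulVec, dotProduct, Fintype.sum_prod_type]
  rw [Matrix.mulVec, Matrix.mulVec, dotProduct, dotProduct, Finset.sum_mul_sum]
  refine Finset.sum_congr rfl fun j _ => Finset.sum_congr rfl fun l _ => ?_
  simp only [Matrix.kroneckerMap_apply]
  ring

lemma key_ineq {m n : ℕ} {p : ℝ} (hp : 0 < p)
    {M : Matrix (Fin m) (Fin m) ℝ} {N : Matrix (Fin n) (Fin n) ℝ}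
    (hM : 0 ≤ opNorm p p M) (hN : 0 ≤ opNorm p p N) (z : Fin m × Fin n → ℝ) :
    pnorm p ((M ⊗ₖ N).mulVec z) ≤ opNorm p p M * opNorm p p N * pnorm p z := by
  set w : Fin m × Fin n → ℝ := fun ik => N.mulVec (fun l => z (ik.1, l)) ik.2 with hw
  have hout : ∀ ik : Fin m × Fin n,
      (M ⊗ₖ N).mulVec z ik = M.mulVec (fun j => w (j, ik.2)) ik.1 := by
    rintro ⟨i, k⟩
    simp only [Matrix.mulVec, dotProduct, hw]
    rw [Fintype.sum_prod_type]
    simp_rw [Finset.mul_sum]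
    refine Finset.sum_congr rfl fun j _ => Finset.sum_congr rfl fun l _ => ?_
    simp only [Matrix.kroneckerMap_apply]
    ring
  have hstep1 : ∑ ik : Fin m × Fin n, |w ik| ^ p
      ≤ opNorm p p N ^ p * ∑ ik : Fin m × Fin n, |z ik| ^ p := by
    rw [Fintype.sum_prod_type, Fintype.sum_prod_type, Finset.mul_sum]
    refine Finset.sum_le_sum fun i _ => ?_
    have h1 : pnorm p (N.mulVec fun l => z (i, l)) ≤ opNorm p p N * pnorm p (fun l => z (i, l)) :=
      pnorm_mulVec_le hp N _
    have h2 := Real.rpow_le_rpow (pnorm_nonneg _ _) h1 hp.le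
    rw [Real.mul_rpow hN (pnorm_nonneg _ _), pnorm_rpow hp.ne', pnorm_rpow hp.ne'] at h2
    exact h2
  have hstep2 : ∑ ik : Fin m × Fin n, |(M ⊗ₖ N).mulVec z ik| ^ p
      ≤ opNorm p p M ^ p * ∑ ik : Fin m × Fin n, |w ik| ^ p := by
    rw [Fintype.sum_prod_type_right, Fintype.sum_prod_type_right, Finset.mul_sum]
    refine Finset.sum_le_sum fun k _ => ?_
    have h1 := pnorm_mulVec_le hp M (fun j => w (j, k))
    have h2 := Real.rpow_le_rpow (pnorm_nonneg _ _) h1 hp.le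
    rw [Real.mul_rpow hM (pnorm_nonneg _ _), pnorm_rpow hp.ne', pnorm_rpow hp.ne'] at h2
    calc ∑ i, |(M ⊗ₖ N).mulVec z (i, k)| ^ p
        = ∑ i, |M.mulVec (fun j => w (j, k)) i| ^ p := by simp_rw [hout]
      _ ≤ opNorm p p M ^ p * ∑ j, |w (j, k)| ^ p := h2
  have hcomb : ∑ ik : Fin m × Fin n, |(M ⊗ₖ N).mulVec z ik| ^ p
      ≤ (opNorm p p M * opNorm p p N) ^ p * ∑ ik : Fin m × Fin n, |z ik| ^ p := by
    calc ∑ ik : Fin m × Fin n, |(M ⊗ₖ N).mulVec z ik| ^ p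
        ≤ opNorm p p M ^ p * (opNorm p p N ^ p * ∑ ik : Fin m × Fin n, |z ik| ^ p) :=
          le_trans hstep2 (mul_le_mul_of_nonneg_left hstep1 (Real.rpow_nonneg hM _))
      _ = (opNorm p p M * opNorm p p N) ^ p * ∑ ik : Fin m × Fin n, |z ik| ^ p := by
          rw [Real.mul_rpow hM hN, mul_assoc]
  have hfin := Real.rpow_le_rpow (sum_abs_rpow_nonneg _ _) hcomb (one_div_pos.mpr hp).le
  rw [Real.mul_rpow (Real.rpow_nonneg (mul_nonneg hM hN) _) (sum_abs_rpow_nonneg _ _),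
    ← Real.rpow_mul (mul_nonneg hM hN), mul_one_div_cancel hp.ne', Real.rpow_one] at hfin
  exact hfin


/-- the `p ↦ p` operator norm is multiplicative under the Kronecker
product: `‖M ⊗ N‖_{p→p} = ‖M‖_{p→p} · ‖N‖_{p→p}`. -/
theorem stmt16 (m n : ℕ) (p : ℝ) (hp : 1 ≤ p)
    (M : Matrix (Fin m) (Fin m) ℝ) (N : Matrix (Fin n) (Fin n) ℝ) :
    opNorm p p (M ⊗ₖ N) = opNorm p p M * opNorm p p N := by
  have hp0 : 0 < p := lt_of_lt_of_le one_pos hp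
  rcases Nat.eq_zero_or_pos m with hm | hm
  · subst hm
    rw [opNorm_of_isEmpty p p (M ⊗ₖ N), opNorm_of_isEmpty p p M, zero_mul]
  rcases Nat.eq_zero_or_pos n with hn | hn
  · subst hn
    rw [opNorm_of_isEmpty p p (M ⊗ₖ N), opNorm_of_isEmpty p p N, mul_zero]
  haveI : Nonempty (Fin m) := Fin.pos_iff_nonempty.mp hm
  haveI : Nonempty (Fin n) := Fin.pos_iff_nonempty.mp hn
  have hM : 0 ≤ opNorm p p M := opNorm_nonneg' hp0 M
  have hN : 0 ≤ opNorm p p N := opNorm_nonneg' hp0 N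
  refine le_antisymm (opNorm_le_of_bound hp0 (mul_nonneg hM hN) (key_ineq hp0 hM hN)) ?_
  have hKnn : 0 ≤ opNorm p p (M ⊗ₖ N) := opNorm_nonneg' hp0 _
  have hone : ∀ (k : ℕ), 0 < k → (fun _ : Fin k => (1:ℝ)) ≠ 0 := by
    intro k hk h
    simpa using congrFun h ⟨0, hk⟩
  rw [show opNorm p p M = sSup {r : ℝ | ∃ x : Fin m → ℝ, x ≠ 0 ∧
        r = pnorm p (M.mulVec x) / pnorm p x} from rfl,
      show opNorm p p N = sSup {r : ℝ | ∃ x : Fin n → ℝ, x ≠ 0 ∧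
        r = pnorm p (N.mulVec x) / pnorm p x} from rfl]
  refine csSup_mul_csSup_le ?_ ?_ (opNorm_set_bddAbove hp0 N) ?_ ?_ hKnn ?_
  · exact ⟨_, ⟨(fun _ => 1), hone m hm, rfl⟩⟩
  · exact ⟨_, ⟨(fun _ => 1), hone n hn, rfl⟩⟩
  · rintro a ⟨x, hx, rfl⟩
    exact div_nonneg (pnorm_nonneg _ _) (pnorm_nonneg _ _)
  · rintro b ⟨y, hy, rfl⟩
    exact div_nonneg (pnorm_nonneg _ _) (pnorm_nonneg _ _)
  · rintro a ⟨x, hx, rfl⟩ b ⟨y, hy, rfl⟩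
    have hxy : (fun jl : Fin m × Fin n => x jl.1 * y jl.2) ≠ 0 := by
      obtain ⟨j, hj⟩ := Function.ne_iff.mp hx
      obtain ⟨l, hl⟩ := Function.ne_iff.mp hy
      intro h
      exact mul_ne_zero hj hl (congrFun h (j, l))
    have hmem : pnorm p (M.mulVec x) / pnorm p x * (pnorm p (N.mulVec y) / pnorm p y)
        ∈ {r : ℝ | ∃ v : Fin m × Fin n → ℝ, v ≠ 0 ∧
            r = pnorm p ((M ⊗ₖ N).mulVec v) / pnorm p v} := by
      refine ⟨fun jl => x jl.1 * y jl.2, hxy, ?_⟩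
      rw [kron_mulVec_tensor, pnorm_tensor hp0, pnorm_tensor hp0, div_mul_div_comm]
    exact le_csSup (opNorm_set_bddAbove hp0 (M ⊗ₖ N)) hmem
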